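/- Let X = (X¹, X²) ∈ R² where X¹ ~ N(μ, 1) with μ ≠ 0 and X² ~ Exp(1) are independent. Then for any β, β̃ ∈ R², if β¹X¹ + β²X² has the same distribution as β̃¹X¹ + β̃²X², it follows that β = β̃. In particular, in the unlinked linear regression model with this covariate distribution, B_0 = {β_0}. -/

import Mathlib

open MeasureTheory ProbabilityTheory Filter Matrix
open scoped ENNReal NNReal Topology

noncomputable section

/-- The Euclidean norm of a vector in `Fin d → ℝ`. -/
def vnorm {d : ℕ} (v : Fin d → ℝ) : ℝ := Real.sqrt (∑ i, v i ^ 2)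

/-- The norm `‖x‖_{2,Γ} = √(xᵀ Γ x)` associated with a matrix `Γ`. -/
def mnorm {d : ℕ} (Γ : Matrix (Fin d) (Fin d) ℝ) (x : Fin d → ℝ) : ℝ :=
  Real.sqrt (x ⬝ᵥ Γ *ᵥ x)

/-- The cumulative distribution function of a measure on `ℝ`. -/
def cdfOf (μ : Measure ℝ) (y : ℝ) : ℝ := (μ (Set.Iic y)).toReal

/-- The empirical CDF of the sample `Y 0 ω, …, Y (n-1) ω`. -/
def empCDF {Ω : Type*} (n : ℕ) (Y : ℕ → Ω → ℝ) (ω : Ω) (y : ℝ) : ℝ :=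
  (n : ℝ)⁻¹ * ∑ i ∈ Finset.range n, if Y i ω ≤ y then (1 : ℝ) else 0

/-- The empirical deconvolution criterion `D_{n,p}(β)`. -/
def Dnp {Ω : Type*} {d : ℕ} (Feps : ℝ → ℝ) (p n : ℕ) (Y : ℕ → Ω → ℝ)
    (X : ℕ → Ω → Fin d → ℝ) (ω : Ω) (β : Fin d → ℝ) : ℝ :=
  (n : ℝ)⁻¹ * ∑ j ∈ Finset.range n,
    |empCDF n Y ω (Y j ω) - (n : ℝ)⁻¹ * ∑ i ∈ Finset.range n, Feps (Y j ω - β ⬝ᵥ X i ω)| ^ p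

/-- The population criterion `D_{2,F^Y}(β)`. -/
def Dpop {d : ℕ} (Feps : ℝ → ℝ) (μX : Measure (Fin d → ℝ)) (μY : Measure ℝ)
    (β : Fin d → ℝ) : ℝ :=
  ∫ y, (cdfOf μY y - ∫ x, Feps (y - β ⬝ᵥ x) ∂μX) ^ 2 ∂μY

/-- `Z 0, Z 1, …` is an i.i.d. sample from the distribution `μ`. -/
def IsIIDSample {Ω : Type*} [MeasureSpace Ω] {E : Type*} [MeasurableSpace E]
    (Z : ℕ → Ω → E) (μ : Measure E) : Prop :=
  (∀ i, Measurable (Z i)) ∧ (∀ i, Measure.map (Z i) ℙ = μ) ∧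
    iIndepFun (m := fun _ => ‹MeasurableSpace E›) Z ℙ

/-- The unlinked linear regression model: `Y =d β₀ᵀ X + ε`. -/
def UnlinkedModel {d : ℕ} (μX : Measure (Fin d → ℝ)) (μeps : Measure ℝ)
    (β₀ : Fin d → ℝ) (μY : Measure ℝ) : Prop :=
  μY = Measure.map (fun q : (Fin d → ℝ) × ℝ => β₀ ⬝ᵥ q.1 + q.2) (μX.prod μeps)

/-- The set `B₀` of vectors `β` such that `βᵀX` has the same distribution as `β₀ᵀX`. -/
def B0set {d : ℕ} (μX : Measure (Fin d → ℝ)) (β₀ : Fin d → ℝ) : Set (Fin d → ℝ) :=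
  {β | Measure.map (fun x => β ⬝ᵥ x) μX = Measure.map (fun x => β₀ ⬝ᵥ x) μX}

namespace GEAux

open Real Set

instance : IsProbabilityMeasure (expMeasure 1) := isProbabilityMeasure_expMeasure one_pos

lemma integral_withDensity_ofReal {p : ℝ → ℝ} (hp : Measurable p) (h0 : ∀ x, 0 ≤ p x)
    (g : ℝ → ℝ) :
    ∫ x, g x ∂(volume.withDensity fun x => ENNReal.ofReal (p x)) = ∫ x, p x * g x := by
  have h1 : (fun x => ENNReal.ofReal (p x)) = fun x => ((p x).toNNReal : ℝ≥0∞) := rfl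
  rw [h1, integral_withDensity_eq_integral_smul hp.real_toNNReal g]
  congr 1
  ext x
  simp [NNReal.smul_def, Real.coe_toNNReal _ (h0 x)]

/-! ### Exponential moments -/

lemma expMeasure_one_eq :
    expMeasure 1
      = volume.withDensity fun x => ENNReal.ofReal (if 0 ≤ x then Real.exp (-x) else 0) := by
  rw [expMeasure, gammaMeasure]
  congr 1
  funext x
  rw [show gammaPDF 1 1 x = exponentialPDF 1 x from rfl, exponentialPDF_eq]
  simp

lemma integrableOn_exp_pow (k : ℕ) :
    IntegrableOn (fun x : ℝ => Real.exp (-x) * x ^ k) (Ioi 0) := by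
  have h := Real.GammaIntegral_convergent (s := (k : ℝ) + 1) (by positivity)
  refine h.congr_fun (fun x hx => ?_) measurableSet_Ioi
  rw [show (k : ℝ) + 1 - 1 = (k : ℝ) by ring]
  simp only [Real.rpow_natCast]

lemma exp_density_mul_pow (k : ℕ) :
    (fun x : ℝ => (if 0 ≤ x then Real.exp (-x) else 0) * x ^ k)
      = Set.indicator (Ici 0) (fun x => Real.exp (-x) * x ^ k) := by
  funext x
  by_cases h : (0:ℝ) ≤ x <;> simp [Set.indicator, h]

lemma integrable_pow_exp (k : ℕ) : Integrable (fun x : ℝ => x ^ k) (expMeasure 1) := by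
  rw [expMeasure_one_eq]
  have hp : Measurable (fun x : ℝ => if 0 ≤ x then Real.exp (-x) else 0) :=
    Measurable.ite measurableSet_Ici (by fun_prop) measurable_const
  have h1 : (fun x : ℝ => ENNReal.ofReal (if 0 ≤ x then Real.exp (-x) else 0))
      = fun x => (((if 0 ≤ x then Real.exp (-x) else 0 : ℝ)).toNNReal : ℝ≥0∞) := rfl
  rw [h1, integrable_withDensity_iff_integrable_coe_smul hp.real_toNNReal]
  have h2 : (fun x : ℝ => ((if 0 ≤ x then Real.exp (-x) else 0 : ℝ).toNNReal : ℝ) • x ^ k)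
      = Set.indicator (Ici 0) (fun x => Real.exp (-x) * x ^ k) := by
    funext x
    by_cases h : (0:ℝ) ≤ x <;>
      simp [Set.indicator, h, smul_eq_mul, Real.coe_toNNReal _ (Real.exp_nonneg _)]
  rw [h2]
  exact ((integrableOn_Ici_iff_integrableOn_Ioi).mpr
    (integrableOn_exp_pow k)).integrable_indicator measurableSet_Ici

lemma integral_pow_exp (k : ℕ) : ∫ x, x ^ k ∂(expMeasure 1) = (Nat.factorial k : ℝ) := by
  rw [expMeasure_one_eq, integral_withDensity_ofReal
    (Measurable.ite measurableSet_Ici (by fun_prop) measurable_const)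
    (fun x => by positivity), exp_density_mul_pow, integral_indicator measurableSet_Ici,
    integral_Ici_eq_integral_Ioi]
  have h := Real.Gamma_eq_integral (s := (k : ℝ) + 1) (by positivity)
  have h2 : ∫ x in Ioi (0:ℝ), Real.exp (-x) * x ^ ((k:ℝ) + 1 - 1)
      = ∫ x in Ioi (0:ℝ), Real.exp (-x) * x ^ k := by
    refine setIntegral_congr_fun measurableSet_Ioi (fun x hx => ?_)
    rw [show (k : ℝ) + 1 - 1 = (k : ℝ) by ring, Real.rpow_natCast]
  rw [← h2, ← h]
  rw [show ((k : ℝ) + 1) = ((k + 1 : ℕ) : ℝ) by push_cast; ring]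
  exact_mod_cast Real.Gamma_nat_eq_factorial k

end GEAux

namespace GEAux

open Real Set

/-! ### Gaussian moments -/

lemma gaussian_std_eq :
    gaussianReal 0 1 = volume.withDensity fun x => ENNReal.ofReal
      ((Real.sqrt (2 * π))⁻¹ * Real.exp (-x ^ 2 / 2)) := by
  rw [gaussianReal_of_var_ne_zero 0 one_ne_zero]
  congr 1
  funext x
  rw [gaussianPDF]
  congr 1
  simp [gaussianPDFReal]

lemma integrable_volume_pow_exp (k : ℕ) :
    Integrable (fun x : ℝ => x ^ k * Real.exp (-x ^ 2 / 2)) volume := by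
  have h := integrable_rpow_mul_exp_neg_mul_sq (b := (1/2 : ℝ)) (by norm_num)
    (s := (k : ℝ)) (lt_of_lt_of_le neg_one_lt_zero (Nat.cast_nonneg k))
  have e : (fun x : ℝ => x ^ ((k : ℝ)) * Real.exp (-(1/2) * x ^ 2))
      = fun x : ℝ => x ^ k * Real.exp (-x ^ 2 / 2) := by
    funext x
    rw [Real.rpow_natCast]
    congr 1
    ring
  rwa [e] at h

lemma integrable_pow_std (k : ℕ) : Integrable (fun x : ℝ => x ^ k) (gaussianReal 0 1) := by
  rw [gaussian_std_eq]
  have hp : Measurable (fun x : ℝ => (Real.sqrt (2 * π))⁻¹ * Real.exp (-x ^ 2 / 2)) := by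
    fun_prop
  have h1 : (fun x : ℝ => ENNReal.ofReal ((Real.sqrt (2 * π))⁻¹ * Real.exp (-x ^ 2 / 2)))
      = fun x => ((((Real.sqrt (2 * π))⁻¹ * Real.exp (-x ^ 2 / 2)).toNNReal : ℝ≥0∞)) := rfl
  rw [h1, integrable_withDensity_iff_integrable_coe_smul hp.real_toNNReal]
  have e : (fun x : ℝ => ((((Real.sqrt (2 * π))⁻¹ * Real.exp (-x ^ 2 / 2)).toNNReal : ℝ)) • x ^ k)
      = fun x : ℝ => (Real.sqrt (2 * π))⁻¹ * (x ^ k * Real.exp (-x ^ 2 / 2)) := by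
    funext x
    rw [Real.coe_toNNReal _ (by positivity), smul_eq_mul]
    ring
  rw [e]
  exact (integrable_volume_pow_exp k).const_mul _

lemma map_neg_std : Measure.map (fun x : ℝ => -x) (gaussianReal 0 1) = gaussianReal 0 1 := by
  have h := gaussianReal_map_const_mul (μ := 0) (v := 1) (-1)
  have h1 : (⟨(-1 : ℝ) ^ 2, sq_nonneg _⟩ : ℝ≥0) = 1 := by
    ext; norm_num
  have h2 : (fun x : ℝ => -x) = (((-1 : ℝ)) * ·) := by funext x; ring
  rw [h2, h]
  congr 1
  · ring
  · ext; norm_num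

lemma odd_moment_std {k : ℕ} (hk : Odd k) : ∫ x, x ^ k ∂(gaussianReal 0 1) = 0 := by
  have h : ∫ x, x ^ k ∂(gaussianReal 0 1) = ∫ x, (-x) ^ k ∂(gaussianReal 0 1) := by
    conv_lhs => rw [← map_neg_std]
    rw [integral_map (φ := fun x : ℝ => -x) (f := fun y : ℝ => y ^ k) (by fun_prop) (by fun_prop)]
  have h2 : ∫ x, (-x) ^ k ∂(gaussianReal 0 1) = - ∫ x, x ^ k ∂(gaussianReal 0 1) := by
    simp_rw [hk.neg_pow]
    exact integral_neg _
  rw [h2] at h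
  linarith

lemma integral_sq_mul_exp : ∫ x : ℝ, x ^ 2 * Real.exp (-x ^ 2 / 2) = Real.sqrt (2 * π) := by
  have hexp : ∀ x : ℝ, HasDerivAt (fun y : ℝ => Real.exp (-y ^ 2 / 2))
      (Real.exp (-x ^ 2 / 2) * (-x)) x := by
    intro x
    have h1 : HasDerivAt (fun y : ℝ => -y ^ 2 / 2) (-x) x := by
      have := HasDerivAt.div_const (HasDerivAt.fun_neg (hasDerivAt_pow 2 x)) 2
      refine this.congr_deriv ?_
      push_cast
      ring
    exact h1.exp
  have hder : ∀ x : ℝ, HasDerivAt (fun y : ℝ => -y * Real.exp (-y ^ 2 / 2))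
      (x ^ 2 * Real.exp (-x ^ 2 / 2) - Real.exp (-x ^ 2 / 2)) x := by
    intro x
    have := ((hasDerivAt_id x).fun_neg).fun_mul (hexp x)
    refine this.congr_deriv ?_
    simp only [id_eq]
    ring
  have hT1 : Tendsto (fun x : ℝ => x * Real.exp (-x ^ 2 / 2)) atTop (𝓝 0) := by
    have hlo := rpow_mul_exp_neg_mul_sq_isLittleO_exp_neg (by norm_num : (0:ℝ) < 1/2) 1
    have hto : Tendsto (fun x : ℝ => Real.exp (-(1/2) * x)) atTop (𝓝 0) := by
      have h0 : Tendsto (fun x : ℝ => -(1/2) * x) atTop atBot := by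
        apply Filter.Tendsto.const_mul_atTop_of_neg (by norm_num : (-(1/2) : ℝ) < 0) tendsto_id
      exact Real.tendsto_exp_atBot.comp h0
    have h := hlo.trans_tendsto hto
    refine h.congr (fun x => ?_)
    rw [Real.rpow_one]
    congr 1
    ring
  have hT1' : Tendsto (fun y : ℝ => -y * Real.exp (-y ^ 2 / 2)) atTop (𝓝 0) := by
    have := hT1.neg
    rw [neg_zero] at this
    exact this.congr (fun x => by ring)
  have hTbot : Tendsto (fun y : ℝ => -y * Real.exp (-y ^ 2 / 2)) atBot (𝓝 0) := by
    have := hT1.comp tendsto_neg_atBot_atTop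
    refine this.congr (fun x => ?_)
    show (-x) * Real.exp (-(-x) ^ 2 / 2) = -x * Real.exp (-x ^ 2 / 2)
    rw [neg_sq]
  have hexpint : Integrable (fun x : ℝ => Real.exp (-x ^ 2 / 2)) volume := by
    have := integrable_exp_neg_mul_sq (b := (1/2 : ℝ)) (by norm_num)
    have e : (fun x : ℝ => Real.exp (-(1/2) * x ^ 2)) = fun x : ℝ => Real.exp (-x ^ 2 / 2) := by
      funext x; congr 1; ring
    rwa [e] at this
  have hφint : Integrable
      (fun x : ℝ => x ^ 2 * Real.exp (-x ^ 2 / 2) - Real.exp (-x ^ 2 / 2)) volume :=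
    (integrable_volume_pow_exp 2).sub hexpint
  have hIoi : ∫ x in Ioi (0:ℝ), (x ^ 2 * Real.exp (-x ^ 2 / 2) - Real.exp (-x ^ 2 / 2))
      = 0 - (-(0:ℝ) * Real.exp (-(0:ℝ) ^ 2 / 2)) :=
    integral_Ioi_of_hasDerivAt_of_tendsto' (fun x _ => hder x) hφint.integrableOn hT1'
  have hIic : ∫ x in Iic (0:ℝ), (x ^ 2 * Real.exp (-x ^ 2 / 2) - Real.exp (-x ^ 2 / 2))
      = (-(0:ℝ) * Real.exp (-(0:ℝ) ^ 2 / 2)) - 0 :=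
    integral_Iic_of_hasDerivAt_of_tendsto' (fun x _ => hder x) hφint.integrableOn hTbot
  have hsum := intervalIntegral.integral_Iic_add_Ioi (b := (0:ℝ)) hφint.integrableOn hφint.integrableOn
  have hφ0 : ∫ x : ℝ, (x ^ 2 * Real.exp (-x ^ 2 / 2) - Real.exp (-x ^ 2 / 2)) = 0 := by
    rw [← hsum, hIoi, hIic]
    ring
  have hgauss : ∫ x : ℝ, Real.exp (-x ^ 2 / 2) = Real.sqrt (2 * π) := by
    have h := integral_gaussian (1/2)
    have e : (fun x : ℝ => Real.exp (-(1/2) * x ^ 2)) = fun x : ℝ => Real.exp (-x ^ 2 / 2) := by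
      funext x; congr 1; ring
    rw [e] at h
    rw [h]
    congr 1
    ring
  have hsub := integral_sub (integrable_volume_pow_exp 2) hexpint
  rw [hφ0, hgauss] at hsub
  linarith

lemma second_moment_std : ∫ x, x ^ 2 ∂(gaussianReal 0 1) = 1 := by
  rw [gaussian_std_eq, integral_withDensity_ofReal (by fun_prop) (fun x => by positivity)]
  have e : (fun x : ℝ => ((Real.sqrt (2 * π))⁻¹ * Real.exp (-x ^ 2 / 2)) * x ^ 2)
      = fun x : ℝ => (Real.sqrt (2 * π))⁻¹ * (x ^ 2 * Real.exp (-x ^ 2 / 2)) := by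
    funext x; ring
  rw [e, integral_const_mul, integral_sq_mul_exp,
    inv_mul_cancel₀ (Real.sqrt_pos.mpr (by positivity)).ne']

end GEAux

namespace GEAux

open Real Set

/-! ### Moments of `gaussianReal μ 1` -/

lemma gaussian_shift (μ : ℝ) : gaussianReal μ 1 = (gaussianReal 0 1).map (· + μ) := by
  rw [gaussianReal_map_add_const, zero_add]

lemma integrable_pow_gaussian (μ : ℝ) (k : ℕ) :
    Integrable (fun x : ℝ => x ^ k) (gaussianReal μ 1) := by
  rw [gaussian_shift, integrable_map_measure (by fun_prop) (by fun_prop)]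
  have e : ((fun x : ℝ => x ^ k) ∘ (· + μ))
      = fun x : ℝ => ∑ j ∈ Finset.range (k+1), x ^ j * (μ ^ (k - j) * (k.choose j : ℝ)) := by
    funext x
    simp only [Function.comp_apply, add_pow]
    exact Finset.sum_congr rfl fun j _ => by ring
  rw [e]
  exact integrable_finset_sum _ fun j _ => (integrable_pow_std j).mul_const _

lemma gmean (μ : ℝ) : ∫ x, x ^ 1 ∂(gaussianReal μ 1) = μ := by
  rw [gaussian_shift, integral_map (φ := fun x : ℝ => x + μ) (f := fun y : ℝ => y ^ 1)
    (by fun_prop) (by fun_prop)]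
  have e : (fun x : ℝ => (x + μ) ^ 1) = fun x : ℝ => x ^ 1 + μ := by funext x; ring
  rw [e, integral_add (integrable_pow_std 1) (integrable_const μ),
    odd_moment_std (by norm_num : Odd 1), integral_const]
  simp

lemma gm2 (μ : ℝ) : ∫ x, x ^ 2 ∂(gaussianReal μ 1) = μ ^ 2 + 1 := by
  rw [gaussian_shift, integral_map (φ := fun x : ℝ => x + μ) (f := fun y : ℝ => y ^ 2)
    (by fun_prop) (by fun_prop)]
  have e : (fun x : ℝ => (x + μ) ^ 2)
      = fun x : ℝ => x ^ 2 + ((2 * μ) * x ^ 1 + μ ^ 2) := by funext x; ring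
  have I1 : Integrable (fun x : ℝ => (2 * μ) * x ^ 1 + μ ^ 2) (gaussianReal 0 1) :=
    ((integrable_pow_std 1).const_mul _).add (integrable_const _)
  rw [e, integral_add (integrable_pow_std 2) I1,
    integral_add ((integrable_pow_std 1).const_mul _) (integrable_const _),
    integral_const_mul, second_moment_std, odd_moment_std (by norm_num : Odd 1), integral_const]
  simp
  ring

lemma gm3 (μ : ℝ) : ∫ x, x ^ 3 ∂(gaussianReal μ 1) = μ ^ 3 + 3 * μ := by
  rw [gaussian_shift, integral_map (φ := fun x : ℝ => x + μ) (f := fun y : ℝ => y ^ 3)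
    (by fun_prop) (by fun_prop)]
  have e : (fun x : ℝ => (x + μ) ^ 3)
      = fun x : ℝ => x ^ 3 + ((3 * μ) * x ^ 2 + ((3 * μ ^ 2) * x ^ 1 + μ ^ 3)) := by
    funext x; ring
  have I1 : Integrable (fun x : ℝ => (3 * μ ^ 2) * x ^ 1 + μ ^ 3) (gaussianReal 0 1) :=
    ((integrable_pow_std 1).const_mul _).add (integrable_const _)
  have I2 : Integrable (fun x : ℝ => (3 * μ) * x ^ 2 + ((3 * μ ^ 2) * x ^ 1 + μ ^ 3))
      (gaussianReal 0 1) := ((integrable_pow_std 2).const_mul _).add I1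
  rw [e, integral_add (integrable_pow_std 3) I2,
    integral_add ((integrable_pow_std 2).const_mul _) I1,
    integral_add ((integrable_pow_std 1).const_mul _) (integrable_const _),
    integral_const_mul, integral_const_mul, second_moment_std,
    odd_moment_std (by norm_num : Odd 1), odd_moment_std (⟨1, by norm_num⟩ : Odd 3), integral_const]
  simp
  ring

lemma gm0 (μ : ℝ) : ∫ x, x ^ 0 ∂(gaussianReal μ 1) = 1 := by simp

lemma em0 : ∫ x, x ^ 0 ∂(expMeasure 1) = 1 := by simp

lemma em1 : ∫ x, x ^ 1 ∂(expMeasure 1) = 1 := by rw [integral_pow_exp]; norm_num [Nat.factorial]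

lemma em2 : ∫ x, x ^ 2 ∂(expMeasure 1) = 2 := by rw [integral_pow_exp]; norm_num [Nat.factorial]

lemma em3 : ∫ x, x ^ 3 ∂(expMeasure 1) = 6 := by rw [integral_pow_exp]; norm_num [Nat.factorial]

/-! ### Product moments -/

lemma hFint (μ : ℝ) (i j : ℕ) :
    Integrable (fun p : ℝ × ℝ => p.1 ^ i * p.2 ^ j)
      ((gaussianReal μ 1).prod (expMeasure 1)) :=
  (integrable_pow_gaussian μ i).mul_prod (integrable_pow_exp j)

lemma hFval (μ : ℝ) (i j : ℕ) :
    ∫ p : ℝ × ℝ, p.1 ^ i * p.2 ^ j ∂((gaussianReal μ 1).prod (expMeasure 1))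
      = (∫ x, x ^ i ∂(gaussianReal μ 1)) * ∫ z, z ^ j ∂(expMeasure 1) :=
  integral_prod_mul _ _

lemma momval1 (μ a b : ℝ) :
    ∫ p : ℝ × ℝ, (a * p.1 + b * p.2) ^ 1 ∂((gaussianReal μ 1).prod (expMeasure 1))
      = a * μ + b := by
  have e : (fun p : ℝ × ℝ => (a * p.1 + b * p.2) ^ 1)
      = fun p : ℝ × ℝ => a * (p.1 ^ 1 * p.2 ^ 0) + b * (p.1 ^ 0 * p.2 ^ 1) := by
    funext p; ring
  rw [e, integral_add ((hFint μ 1 0).const_mul a) ((hFint μ 0 1).const_mul b),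
    integral_const_mul, integral_const_mul, hFval, hFval, gmean, gm0, em0, em1]
  ring

lemma momval2 (μ a b : ℝ) :
    ∫ p : ℝ × ℝ, (a * p.1 + b * p.2) ^ 2 ∂((gaussianReal μ 1).prod (expMeasure 1))
      = a ^ 2 * (μ ^ 2 + 1) + 2 * a * b * μ + 2 * b ^ 2 := by
  have e : (fun p : ℝ × ℝ => (a * p.1 + b * p.2) ^ 2)
      = fun p : ℝ × ℝ => a ^ 2 * (p.1 ^ 2 * p.2 ^ 0)
          + ((2 * a * b) * (p.1 ^ 1 * p.2 ^ 1) + b ^ 2 * (p.1 ^ 0 * p.2 ^ 2)) := by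
    funext p; ring
  have I1 : Integrable (fun p : ℝ × ℝ => (2 * a * b) * (p.1 ^ 1 * p.2 ^ 1)
      + b ^ 2 * (p.1 ^ 0 * p.2 ^ 2)) ((gaussianReal μ 1).prod (expMeasure 1)) :=
    ((hFint μ 1 1).const_mul _).add ((hFint μ 0 2).const_mul _)
  rw [e, integral_add ((hFint μ 2 0).const_mul _) I1,
    integral_add ((hFint μ 1 1).const_mul _) ((hFint μ 0 2).const_mul _),
    integral_const_mul, integral_const_mul, integral_const_mul,
    hFval, hFval, hFval, gm2, gmean, gm0, em0, em1, em2]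
  ring

lemma momval3 (μ a b : ℝ) :
    ∫ p : ℝ × ℝ, (a * p.1 + b * p.2) ^ 3 ∂((gaussianReal μ 1).prod (expMeasure 1))
      = a ^ 3 * (μ ^ 3 + 3 * μ) + 3 * a ^ 2 * b * (μ ^ 2 + 1) + 6 * a * b ^ 2 * μ
        + 6 * b ^ 3 := by
  have e : (fun p : ℝ × ℝ => (a * p.1 + b * p.2) ^ 3)
      = fun p : ℝ × ℝ => a ^ 3 * (p.1 ^ 3 * p.2 ^ 0)
          + ((3 * a ^ 2 * b) * (p.1 ^ 2 * p.2 ^ 1)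
            + ((3 * a * b ^ 2) * (p.1 ^ 1 * p.2 ^ 2) + b ^ 3 * (p.1 ^ 0 * p.2 ^ 3))) := by
    funext p; ring
  have I1 : Integrable (fun p : ℝ × ℝ => (3 * a * b ^ 2) * (p.1 ^ 1 * p.2 ^ 2)
      + b ^ 3 * (p.1 ^ 0 * p.2 ^ 3)) ((gaussianReal μ 1).prod (expMeasure 1)) :=
    ((hFint μ 1 2).const_mul _).add ((hFint μ 0 3).const_mul _)
  have I2 : Integrable (fun p : ℝ × ℝ => (3 * a ^ 2 * b) * (p.1 ^ 2 * p.2 ^ 1)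
      + ((3 * a * b ^ 2) * (p.1 ^ 1 * p.2 ^ 2) + b ^ 3 * (p.1 ^ 0 * p.2 ^ 3)))
      ((gaussianReal μ 1).prod (expMeasure 1)) := ((hFint μ 2 1).const_mul _).add I1
  rw [e, integral_add ((hFint μ 3 0).const_mul _) I2,
    integral_add ((hFint μ 2 1).const_mul _) I1,
    integral_add ((hFint μ 1 2).const_mul _) ((hFint μ 0 3).const_mul _),
    integral_const_mul, integral_const_mul, integral_const_mul, integral_const_mul,
    hFval, hFval, hFval, hFval, gm3, gm2, gmean, gm0, em0, em1, em2, em3]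
  ring

lemma key (μ : ℝ) (hμ : μ ≠ 0) (β βt : ℝ × ℝ)
    (h : Measure.map (fun p : ℝ × ℝ => β.1 * p.1 + β.2 * p.2)
            ((gaussianReal μ 1).prod (expMeasure 1))
          = Measure.map (fun p : ℝ × ℝ => βt.1 * p.1 + βt.2 * p.2)
              ((gaussianReal μ 1).prod (expMeasure 1))) : β = βt := by
  have mom : ∀ k : ℕ,
      ∫ p : ℝ × ℝ, (β.1 * p.1 + β.2 * p.2) ^ k ∂((gaussianReal μ 1).prod (expMeasure 1))
        = ∫ p : ℝ × ℝ, (βt.1 * p.1 + βt.2 * p.2) ^ k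
            ∂((gaussianReal μ 1).prod (expMeasure 1)) := by
    intro k
    calc ∫ p : ℝ × ℝ, (β.1 * p.1 + β.2 * p.2) ^ k ∂((gaussianReal μ 1).prod (expMeasure 1))
        = ∫ y, y ^ k ∂(Measure.map (fun p : ℝ × ℝ => β.1 * p.1 + β.2 * p.2)
            ((gaussianReal μ 1).prod (expMeasure 1))) :=
          (integral_map (by fun_prop) (measurable_id.pow_const k).aestronglyMeasurable).symm
      _ = ∫ y, y ^ k ∂(Measure.map (fun p : ℝ × ℝ => βt.1 * p.1 + βt.2 * p.2)
            ((gaussianReal μ 1).prod (expMeasure 1))) := by rw [h]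
      _ = _ := integral_map (by fun_prop) (measurable_id.pow_const k).aestronglyMeasurable
  have h1 := mom 1
  have h2 := mom 2
  have h3 := mom 3
  rw [momval1, momval1] at h1
  rw [momval2, momval2] at h2
  rw [momval3, momval3] at h3
  have hb3 : β.2 ^ 3 = βt.2 ^ 3 := by
    linear_combination (1/2) * h3 - (3/2) * (β.1 * μ + β.2) * h2
      + ((β.1 * μ + β.2) ^ 2 + (β.1 * μ + β.2) * (βt.1 * μ + βt.2) + (βt.1 * μ + βt.2) ^ 2
        - (3/2) * (βt.1 ^ 2 * (μ ^ 2 + 1) + 2 * βt.1 * βt.2 * μ + 2 * βt.2 ^ 2)) * h1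
  have hb : β.2 = βt.2 := (Odd.strictMono_pow (R := ℝ) (⟨1, by norm_num⟩ : Odd 3)).injective hb3
  have ha : β.1 = βt.1 := by
    have hm : β.1 * μ = βt.1 * μ := by rw [hb] at h1; linarith
    exact mul_right_cancel₀ hμ hm
  exact Prod.ext ha hb

end GEAux

/-- **Uniqueness for a Gaussian–exponential design.**  Let
`X = (X¹, X²)` with `X¹ ~ N(μ, 1)`, `μ ≠ 0`, and `X² ~ Exp(1)` independent.  If
`β¹X¹ + β²X²` and `β̃¹X¹ + β̃²X²` have the same distribution then `β = β̃`; in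
particular `B₀ = {β₀}` for every `β₀ ∈ ℝ²`. -/
theorem gaussian_exponential_uniqueness (μ : ℝ) (hμ : μ ≠ 0) :
    (∀ β βt : ℝ × ℝ,
        Measure.map (fun p : ℝ × ℝ => β.1 * p.1 + β.2 * p.2)
            ((gaussianReal μ 1).prod (expMeasure 1))
          = Measure.map (fun p : ℝ × ℝ => βt.1 * p.1 + βt.2 * p.2)
              ((gaussianReal μ 1).prod (expMeasure 1)) →
        β = βt) ∧
      ∀ β₀ : ℝ × ℝ,
        {β : ℝ × ℝ |
            Measure.map (fun p : ℝ × ℝ => β.1 * p.1 + β.2 * p.2)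
                ((gaussianReal μ 1).prod (expMeasure 1))
              = Measure.map (fun p : ℝ × ℝ => β₀.1 * p.1 + β₀.2 * p.2)
                  ((gaussianReal μ 1).prod (expMeasure 1))}
          = {β₀} := by
  refine ⟨fun β βt h => GEAux.key μ hμ β βt h, fun β₀ => ?_⟩
  ext β
  simp only [Set.mem_setOf_eq, Set.mem_singleton_iff]
  exact ⟨fun h => GEAux.key μ hμ β β₀ h, fun h => by rw [h]⟩
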